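/- arXiv:1507.03429 — 2 statements merged into one kernel-verified Lean document; each statement's English description precedes it below -/
import Mathlib

section
/- If F is a cumulative distribution function whose tail satisfies 1 - F(x) = x^{-1/γ} L(x) for x large, where γ > 0 and L is slowly varying, then F belongs to the domain of attraction of the Generalized Extreme Value distribution G_γ(x) = exp(-(1+γx)^{-1/γ}); that is, there exists a positive function a(t) such that (b(tx) - b(t))/a(t) → (x^γ - 1)/γ as t → ∞ for every x > 0, where b(t) = inf{y : 1/(1-F(y)) ≥ t}. -/
open Filter Set

/-- A cdf with regularly varying tail of index -1/γ belongs to the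
domain of attraction of the GEV distribution G_γ. -/
theorem stmt0 (γ : ℝ) (hγ : 0 < γ) (F L : ℝ → ℝ)
    (hF_mono : Monotone F)
    (hF_top : Tendsto F atTop (nhds 1))
    (hF_bot : Tendsto F atBot (nhds 0))
    (hL_pos : ∀ x > (0:ℝ), 0 < L x)
    (hL_slow : ∀ y > (0:ℝ), Tendsto (fun x => L (y * x) / L x) atTop (nhds 1))
    (h_tail : ∀ᶠ x in atTop, 1 - F x = x ^ (-(1/γ)) * L x)
    (b : ℝ → ℝ)
    (hb : ∀ t, b t = sInf {y : ℝ | t ≤ 1 / (1 - F y)}) :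
    ∃ a : ℝ → ℝ, (∀ t, 0 < a t) ∧
      ∀ x > (0:ℝ),
        Tendsto (fun t => (b (t * x) - b t) / a t) atTop
          (nhds ((x ^ γ - 1) / γ)) := by
  classical
  set V : ℝ → ℝ := fun y => 1 / (1 - F y) with hVdef
  set S : ℝ → Set ℝ := fun t => {y | t ≤ V y} with hSdef
  have hbS : ∀ t, b t = sInf (S t) := hb
  -- F < 1 everywhere
  have hFlt : ∀ y, F y < 1 := by
    intro y
    obtain ⟨x, ⟨hx3, hx1⟩, hx2⟩ :=
      ((h_tail.and (eventually_ge_atTop y)).and (eventually_gt_atTop 0)).exists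
    have hpos : 0 < 1 - F x := by
      rw [hx3]
      exact mul_pos (Real.rpow_pos_of_pos hx2 _) (hL_pos x hx2)
    have := hF_mono hx1
    linarith
  have hFpos : ∀ y, 0 < 1 - F y := fun y => by linarith [hFlt y]
  have hVpos : ∀ y, 0 < V y := fun y => one_div_pos.2 (hFpos y)
  have hVmono : Monotone V := by
    intro y z hyz
    have := hF_mono hyz
    exact one_div_le_one_div_of_le (hFpos z) (by linarith)
  have hVtop : Tendsto V atTop atTop := by
    have h0 : Tendsto (fun y => 1 - F y) atTop (nhdsWithin 0 (Set.Ioi 0)) := by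
      apply tendsto_nhdsWithin_of_tendsto_nhds_of_eventually_within
      · have := (tendsto_const_nhds : Tendsto (fun _ : ℝ => (1:ℝ)) atTop _).sub hF_top
        simpa using this
      · exact Eventually.of_forall fun y => hFpos y
    have := h0.inv_tendsto_nhdsGT_zero
    simpa [hVdef, one_div, Pi.inv_def] using this
  -- basic properties of S and b
  have hSne : ∀ t, (S t).Nonempty := fun t => (hVtop.eventually_ge_atTop t).exists
  have hVlt : ∀ t > (0:ℝ), ∀ y, F y < 1 - 1/t → V y < t := by
    intro t ht y hy
    have h1 : 1/t < 1 - F y := by linarith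
    rw [hVdef, div_lt_iff₀ (hFpos y)]
    have := (div_lt_iff₀ ht).1 h1
    linarith [mul_comm t (1 - F y)]
  have hSbdd : ∀ t > (1:ℝ), BddBelow (S t) := by
    intro t ht
    have ht0 : (0:ℝ) < t := by linarith
    have h1 : (0:ℝ) < 1 - 1/t := by
      have : 1/t < 1 := by rw [div_lt_one ht0]; exact ht
      linarith
    obtain ⟨M, hM⟩ := eventually_atBot.1 (hF_bot.eventually (eventually_lt_nhds h1))
    refine ⟨M, fun y hy => ?_⟩
    by_contra h
    push_neg at h
    have hVy : V y < t := hVlt t ht0 y (hM y h.le)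
    have : t ≤ V y := hy
    linarith
  -- lower bound beyond b t
  have hgt : ∀ t z, b t < z → t ≤ V z := by
    intro t z hz
    rw [hbS t] at hz
    obtain ⟨y, hy, hyz⟩ := exists_lt_of_csInf_lt (hSne t) hz
    exact le_trans hy (hVmono hyz.le)
  have hlb : ∀ t > (1:ℝ), ∀ y, y < b t → V y < t := by
    intro t ht y hy
    by_contra h
    push_neg at h
    have : b t ≤ y := by
      rw [hbS t]; exact csInf_le (hSbdd t ht) h
    linarith
  have hbtop : Tendsto b atTop atTop := by
    rw [tendsto_atTop]
    intro M
    filter_upwards [eventually_gt_atTop (V M)] with t ht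
    rw [hbS t]
    apply le_csInf (hSne t)
    intro y hy
    by_contra h
    push_neg at h
    have : V y ≤ V M := hVmono h.le
    have : t ≤ V M := le_trans hy this
    linarith
  -- ratio lemma for V
  have hratio : ∀ r > (0:ℝ), Tendsto (fun u => V (r * u) / V u) atTop (nhds (r ^ (1/γ))) := by
    intro r hr
    have h2 : Tendsto (fun u => L u / L (r * u)) atTop (nhds 1) := by
      have := (hL_slow r hr).inv₀ one_ne_zero
      simpa [inv_div] using this
    have h1 : Tendsto (fun u => r ^ (1/γ) * (L u / L (r * u))) atTop
        (nhds (r ^ (1/γ))) := by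
      simpa using tendsto_const_nhds.mul h2
    apply h1.congr'
    filter_upwards [h_tail, (tendsto_id.const_mul_atTop hr).eventually h_tail,
      eventually_gt_atTop 0] with u htu htru hu
    simp only [id_eq] at htru
    have hru : (0:ℝ) < r * u := mul_pos hr hu
    have hrp : (0:ℝ) < r ^ (1/γ) := Real.rpow_pos_of_pos hr _
    have hup : (0:ℝ) < u ^ (1/γ) := Real.rpow_pos_of_pos hu _
    have hLu := hL_pos u hu
    have hLru := hL_pos _ hru
    simp only [hVdef]
    rw [htu, htru, Real.mul_rpow hr.le hu.le, Real.rpow_neg hr.le, Real.rpow_neg hu.le]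
    field_simp
  -- rpow helpers
  have hpow_pos : ∀ x > (0:ℝ), (0:ℝ) < x ^ γ := fun x hx => Real.rpow_pos_of_pos hx _
  have hpow_inv : ∀ x > (0:ℝ), (x ^ γ) ^ (1/γ) = x := by
    intro x hx
    rw [one_div]
    exact Real.rpow_rpow_inv hx.le hγ.ne'
  -- upper bound for b(t x)
  have hbratio : ∀ x > (0:ℝ), ∀ c, x ^ γ < c → ∀ᶠ t in atTop, b (t * x) ≤ c * b t := by
    intro x hx c hc
    have hxγ := hpow_pos x hx
    have hc0 : (0:ℝ) < c := lt_trans hxγ hc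
    set k : ℝ := (1 + c / x ^ γ) / 2 with hk
    have hck : (1:ℝ) < c / x ^ γ := (one_lt_div hxγ).2 hc
    have hk1 : (1:ℝ) < k := by rw [hk]; linarith
    have hk0 : (0:ℝ) < k := by linarith
    have hkc : k < c / x ^ γ := by rw [hk]; linarith
    set r : ℝ := c / k with hr
    have hr0 : (0:ℝ) < r := div_pos hc0 hk0
    have hrx : x ^ γ < r := by
      rw [hr, lt_div_iff₀ hk0]
      calc x ^ γ * k < x ^ γ * (c / x ^ γ) := by
            exact mul_lt_mul_of_pos_left hkc hxγ
        _ = c := by field_simp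
    have hrx' : x < r ^ (1/γ) := by
      calc x = (x ^ γ) ^ (1/γ) := (hpow_inv x hx).symm
        _ < r ^ (1/γ) := Real.rpow_lt_rpow hxγ.le hrx (by positivity)
    have hcomp : Tendsto (fun t => V (r * (k * b t)) / V (k * b t)) atTop
        (nhds (r ^ (1/γ))) := (hratio r hr0).comp (hbtop.const_mul_atTop hk0)
    filter_upwards [hcomp.eventually (eventually_gt_nhds hrx'),
      hbtop.eventually_gt_atTop 0, eventually_gt_atTop 1,
      (tendsto_id.atTop_mul_const hx).eventually_gt_atTop 1] with t hrat hbt ht1 htx1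
    have hrk : r * (k * b t) = c * b t := by
      rw [hr]; field_simp
    rw [hrk] at hrat
    have hVk : t ≤ V (k * b t) := by
      apply hgt
      nlinarith
    have h5 : x * t ≤ x * V (k * b t) := mul_le_mul_of_nonneg_left hVk hx.le
    have h6 : x * V (k * b t) < V (c * b t) :=
      (lt_div_iff₀ (hVpos (k * b t))).1 hrat
    have hmem : c * b t ∈ S (t * x) := by
      simp only [hSdef, Set.mem_setOf_eq]
      calc t * x = x * t := mul_comm t x
        _ ≤ V (c * b t) := le_of_lt (lt_of_le_of_lt h5 h6)
    rw [hbS (t * x)]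
    exact csInf_le (hSbdd (t * x) (by simpa [id] using htx1)) hmem
  -- lower bound for b(t x)
  have hbratio' : ∀ x > (0:ℝ), ∀ c, 0 < c → c < x ^ γ →
      ∀ᶠ t in atTop, c * b t ≤ b (t * x) := by
    intro x hx c hc0 hc
    have hxγ := hpow_pos x hx
    set k : ℝ := (1 + c / x ^ γ) / 2 with hk
    have hck : c / x ^ γ < 1 := (div_lt_one hxγ).2 hc
    have hck0 : (0:ℝ) < c / x ^ γ := div_pos hc0 hxγ
    have hk1 : k < 1 := by rw [hk]; linarith
    have hk0 : (0:ℝ) < k := by rw [hk]; linarith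
    have hkc : c / x ^ γ < k := by rw [hk]; linarith
    set r : ℝ := c / k with hr
    have hr0 : (0:ℝ) < r := div_pos hc0 hk0
    have hrx : r < x ^ γ := by
      rw [hr, div_lt_iff₀ hk0]
      calc c = x ^ γ * (c / x ^ γ) := by field_simp
        _ < x ^ γ * k := mul_lt_mul_of_pos_left hkc hxγ
    have hrx' : r ^ (1/γ) < x := by
      calc r ^ (1/γ) < (x ^ γ) ^ (1/γ) := Real.rpow_lt_rpow hr0.le hrx (by positivity)
        _ = x := hpow_inv x hx
    have hcomp : Tendsto (fun t => V (r * (k * b t)) / V (k * b t)) atTop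
        (nhds (r ^ (1/γ))) := (hratio r hr0).comp (hbtop.const_mul_atTop hk0)
    filter_upwards [hcomp.eventually (eventually_lt_nhds hrx'),
      hbtop.eventually_gt_atTop 0, eventually_gt_atTop 1] with t hrat hbt ht1
    have hrk : r * (k * b t) = c * b t := by
      rw [hr]; field_simp
    rw [hrk] at hrat
    have hVk : V (k * b t) < t := by
      apply hlb t ht1
      nlinarith
    have h6 : V (c * b t) < x * V (k * b t) :=
      (div_lt_iff₀ (hVpos (k * b t))).1 hrat
    have h7 : V (c * b t) < t * x := by
      calc V (c * b t) < x * V (k * b t) := h6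
        _ < x * t := mul_lt_mul_of_pos_left hVk hx
        _ = t * x := mul_comm x t
    rw [hbS (t * x)]
    apply le_csInf (hSne (t * x))
    intro y hy
    by_contra h
    push_neg at h
    have : V y ≤ V (c * b t) := hVmono h.le
    simp only [hSdef, Set.mem_setOf_eq] at hy
    linarith
  -- main ratio limit
  have hmain : ∀ x > (0:ℝ), Tendsto (fun t => b (t * x) / b t) atTop (nhds (x ^ γ)) := by
    intro x hx
    have hxγ := hpow_pos x hx
    rw [tendsto_order]
    constructor
    · intro c hc
      set c' : ℝ := (max c 0 + x ^ γ) / 2 with hc'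
      have h1 : max c 0 < x ^ γ := max_lt hc hxγ
      have hc'0 : (0:ℝ) < c' := by
        have : (0:ℝ) ≤ max c 0 := le_max_right c 0
        rw [hc']; linarith
      have hc'lt : c' < x ^ γ := by rw [hc']; linarith
      have hcc' : c < c' := by
        have : c ≤ max c 0 := le_max_left c 0
        rw [hc']; linarith
      filter_upwards [hbratio' x hx c' hc'0 hc'lt, hbtop.eventually_gt_atTop 0]
        with t h1 h2
      calc c < c' := hcc'
        _ ≤ b (t * x) / b t := (le_div_iff₀ h2).2 h1
    · intro c hc
      set c' : ℝ := (x ^ γ + c) / 2 with hc'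
      have hc'lt : x ^ γ < c' := by rw [hc']; linarith
      have hcc' : c' < c := by rw [hc']; linarith
      filter_upwards [hbratio x hx c' hc'lt, hbtop.eventually_gt_atTop 0]
        with t h1 h2
      calc b (t * x) / b t ≤ c' := (div_le_iff₀ h2).2 h1
        _ < c := hcc'
  -- conclusion
  refine ⟨fun t => γ * max (b t) 1, fun t => by positivity, ?_⟩
  intro x hx
  have h1 : Tendsto (fun t => (b (t * x) / b t - 1) / γ) atTop
      (nhds ((x ^ γ - 1) / γ)) :=
    ((hmain x hx).sub tendsto_const_nhds).div_const γ
  apply h1.congr'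
  filter_upwards [hbtop.eventually_ge_atTop 1] with t ht
  have hbt : (0:ℝ) < b t := lt_of_lt_of_le one_pos ht
  rw [max_eq_left ht, div_sub_one hbt.ne', div_div, mul_comm (b t) γ]
end

section
/- Let γ > 0, r < 0. The function ψ(x) := ψ₂(x, ψ₁(x)) - 1/(1-r), where ψ₁(x) := ∫₀^∞ (z/x+1)^{-1/γ}(z+1)^{-1} dz and ψ₂(x,y) := (r/y)∫₀^∞ (z/x+1)^{-1/γ}(z+1)^{r/y - 1} dz + 1, is strictly decreasing on (0,∞). In particular, x = 1 is the unique zero of ψ on (0,∞). -/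
open Filter Set MeasureTheory

section Stmt7Aux
open Real

-- φ A = A log A / (A-1) strictly increasing on Ioi 1
lemma phi_mono : StrictMonoOn (fun A : ℝ => A * Real.log A / (A - 1)) (Ioi 1) := by
  have hderiv : ∀ A ∈ Ioi (1:ℝ), HasDerivAt (fun A : ℝ => A * Real.log A / (A - 1))
      ((A - 1 - Real.log A) / (A - 1) ^ 2) A := by
    intro A hA
    have hA1 : (1:ℝ) < A := hA
    have h0 : A ≠ 0 := by positivity
    have hne : A - 1 ≠ 0 := by intro h; nlinarith
    have hnum : HasDerivAt (fun A : ℝ => A * Real.log A) (Real.log A + 1) A :=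
      Real.hasDerivAt_mul_log h0
    have hden : HasDerivAt (fun A : ℝ => A - 1) 1 A := (hasDerivAt_id A).sub_const 1
    have := hnum.div hden hne
    refine this.congr_deriv ?_
    ring
  apply strictMonoOn_of_deriv_pos (convex_Ioi 1)
  · exact fun A hA => ((hderiv A hA).continuousAt.continuousWithinAt)
  · intro A hA
    rw [interior_Ioi] at hA
    rw [(hderiv A hA).deriv]
    have hA1 : (1:ℝ) < A := hA
    have hlt : Real.log A < A - 1 := Real.log_lt_sub_one_of_pos (by linarith) (by linarith)
    have h2 : (0:ℝ) < (A-1)^2 := by nlinarith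
    have h3 : 0 < A - 1 - Real.log A := by linarith
    exact div_pos h3 h2

-- deriv of h s = log (log (1 + exp s))
lemma h_hasDeriv (s : ℝ) : HasDerivAt (fun s : ℝ => Real.log (Real.log (1 + Real.exp s)))
    (Real.exp s / (1 + Real.exp s) / Real.log (1 + Real.exp s)) s := by
  have h1 : (0:ℝ) < 1 + Real.exp s := by positivity
  have h2 : (1:ℝ) < 1 + Real.exp s := by have := Real.exp_pos s; linarith
  have h3 : 0 < Real.log (1 + Real.exp s) := Real.log_pos h2
  have d1 : HasDerivAt (fun s : ℝ => 1 + Real.exp s) (Real.exp s) s :=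
    (Real.hasDerivAt_exp s).const_add 1
  have d2 : HasDerivAt (fun s : ℝ => Real.log (1 + Real.exp s))
      (Real.exp s / (1 + Real.exp s)) s := d1.log h1.ne'
  exact d2.log h3.ne'

lemma h_strictConcave : StrictConcaveOn ℝ univ (fun s : ℝ => Real.log (Real.log (1 + Real.exp s))) := by
  apply StrictAnti.strictConcaveOn_univ_of_deriv
  · apply Continuous.log
    · apply Continuous.log
      · exact continuous_const.add Real.continuous_exp
      · intro s; have := Real.exp_pos s; positivity
    · intro s
      have h2 : (1:ℝ) < 1 + Real.exp s := by have := Real.exp_pos s; linarith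
      exact (Real.log_pos h2).ne'
  · have hd : deriv (fun s : ℝ => Real.log (Real.log (1 + Real.exp s)))
        = fun s => Real.exp s / (1 + Real.exp s) / Real.log (1 + Real.exp s) := by
      funext s; exact (h_hasDeriv s).deriv
    rw [hd]
    intro s t hst
    have hes : (0:ℝ) < Real.exp s := Real.exp_pos s
    have het : (0:ℝ) < Real.exp t := Real.exp_pos t
    have hest : Real.exp s < Real.exp t := Real.exp_lt_exp.2 hst
    -- rewrite as 1 / ((1+v) log(1+v) / v) and use phi_mono
    have key : ∀ v : ℝ, 0 < v → v / (1 + v) / Real.log (1 + v)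
        = 1 / ((1 + v) * Real.log (1 + v) / v) := by
      intro v hv
      have h2 : (1:ℝ) < 1 + v := by linarith
      have h3 : 0 < Real.log (1 + v) := Real.log_pos h2
      field_simp
    simp only []
    rw [key _ hes, key _ het]
    have hmono := phi_mono (a := 1 + Real.exp s) (b := 1 + Real.exp t)
      (by simp [hes] : (1 + Real.exp s) ∈ Ioi (1:ℝ))
      (by simp [het] : (1 + Real.exp t) ∈ Ioi (1:ℝ)) (by linarith)
    simp only [add_sub_cancel_left] at hmono
    have hpos : 0 < (1 + Real.exp s) * Real.log (1 + Real.exp s) / Real.exp s := by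
      have h2 : (1:ℝ) < 1 + Real.exp s := by linarith
      have h3 : 0 < Real.log (1 + Real.exp s) := Real.log_pos h2
      positivity
    exact one_div_lt_one_div_of_lt hpos hmono


-- two point strict concavity
lemma twopoint {h : ℝ → ℝ} (hc : StrictConcaveOn ℝ univ h) {p q c d : ℝ}
    (hpc : p < c) (hcq : c < q) (hsum : c + d = p + q) : h p + h q < h c + h d := by
  have hpq : p < q := by linarith
  have hne : q - p ≠ 0 := by intro h; linarith
  obtain ⟨θ, hθ⟩ : ∃ θ : ℝ, θ = (q - c) / (q - p) := ⟨_, rfl⟩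
  have hθ0 : 0 < θ := hθ ▸ div_pos (by linarith) (by linarith)
  have hθ1 : θ < 1 := by
    rw [hθ, div_lt_one (by linarith)]; linarith
  have hkey : θ * (q - p) = q - c := by
    rw [hθ]; field_simp
  have hc' : c = θ * p + (1 - θ) * q := by linear_combination hkey
  have hd' : d = (1 - θ) * p + θ * q := by linear_combination hsum - hkey
  have h1 := hc.2 (mem_univ p) (mem_univ q) (ne_of_lt hpq) hθ0 (by linarith : (0:ℝ) < 1 - θ)
    (by ring : θ + (1 - θ) = 1)
  have h2 := hc.2 (mem_univ p) (mem_univ q) (ne_of_lt hpq) (by linarith : (0:ℝ) < 1 - θ)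
    hθ0 (by ring : (1 - θ) + θ = 1)
  simp only [smul_eq_mul] at h1 h2
  rw [hc', hd']
  nlinarith [h1, h2]

-- four point lemma
lemma fourpt {x1 x2 t1 t2 : ℝ} (hx1 : 0 < x1) (hx12 : x1 < x2) (ht2 : 0 < t2) (ht21 : t2 < t1) :
    Real.log (1 + x2 * t1) * Real.log (1 + x1 * t2)
      < Real.log (1 + x1 * t1) * Real.log (1 + x2 * t2) := by
  have hx2 : 0 < x2 := by linarith
  have ht1 : 0 < t1 := by linarith
  set h : ℝ → ℝ := fun s => Real.log (Real.log (1 + Real.exp s)) with hh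
  have key : h (Real.log x1 + Real.log t2) + h (Real.log x2 + Real.log t1)
      < h (Real.log x1 + Real.log t1) + h (Real.log x2 + Real.log t2) := by
    apply twopoint h_strictConcave
    · have := Real.log_lt_log ht2 ht21; linarith
    · have := Real.log_lt_log hx1 hx12; linarith
    · ring
  have hform : ∀ x t : ℝ, 0 < x → 0 < t → h (Real.log x + Real.log t)
      = Real.log (Real.log (1 + x * t)) := by
    intro x t hx ht
    rw [hh]
    simp only []
    rw [← Real.log_mul hx.ne' ht.ne', Real.exp_log (by positivity)]
  rw [hform _ _ hx1 ht2, hform _ _ hx2 ht1, hform _ _ hx1 ht1, hform _ _ hx2 ht2] at key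
  have L : ∀ x t : ℝ, 0 < x → 0 < t → 0 < Real.log (1 + x * t) := by
    intro x t hx ht; apply Real.log_pos; nlinarith
  have l11 := L _ _ hx1 ht1; have l12 := L _ _ hx1 ht2
  have l21 := L _ _ hx2 ht1; have l22 := L _ _ hx2 ht2
  have := Real.exp_lt_exp.2 key
  rw [Real.exp_add, Real.exp_add, Real.exp_log l12, Real.exp_log l21,
    Real.exp_log l11, Real.exp_log l22] at this
  linarith [this]

-- exp chord inequalities
lemma expo1 {r κ b a : ℝ} (hr : r < 0) (hκ : κ ≤ b) (hba : b < a) :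
    Real.exp (r * b) - Real.exp (r * a) < r * Real.exp (r * κ) * (b - a) := by
  have h1 : Real.exp (r * (a - b)) > r * (a - b) + 1 := by
    have : r * (a - b) ≠ 0 := by
      have : r * (a - b) < 0 := mul_neg_of_neg_of_pos hr (by linarith)
      linarith
    linarith [Real.add_one_lt_exp this]
  have h2 : Real.exp (r * a) - Real.exp (r * b) > Real.exp (r * b) * (r * (a - b)) := by
    have := mul_lt_mul_of_pos_left h1 (Real.exp_pos (r * b))
    calc Real.exp (r * a) - Real.exp (r * b)
        = Real.exp (r * b) * (Real.exp (r * (a - b)) - 1) := by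
          rw [mul_sub, ← Real.exp_add]; ring_nf
      _ > Real.exp (r * b) * (r * (a - b)) := by nlinarith [Real.exp_pos (r*b)]
  have h3 : Real.exp (r * b) * (r * (a - b)) ≥ Real.exp (r * κ) * (r * (a - b)) := by
    have hb : Real.exp (r * b) ≤ Real.exp (r * κ) :=
      Real.exp_le_exp.2 (by nlinarith)
    have : r * (a - b) < 0 := mul_neg_of_neg_of_pos hr (by linarith)
    nlinarith
  nlinarith

lemma expo2 {r κ b a : ℝ} (hr : r < 0) (hba : b < a) (haκ : a ≤ κ) :
    Real.exp (r * a) - Real.exp (r * b) < r * Real.exp (r * κ) * (a - b) := by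
  have h1 : Real.exp (r * (b - a)) > r * (b - a) + 1 := by
    have : r * (b - a) ≠ 0 := by
      have : 0 < r * (b - a) := mul_pos_of_neg_of_neg hr (by linarith)
      linarith
    linarith [Real.add_one_lt_exp this]
  have h2 : Real.exp (r * a) - Real.exp (r * b) < Real.exp (r * a) * (r * (a - b)) := by
    calc Real.exp (r * a) - Real.exp (r * b)
        = Real.exp (r * a) * (1 - Real.exp (r * (b - a))) := by
          rw [mul_sub, ← Real.exp_add]; ring_nf
      _ < Real.exp (r * a) * (r * (a - b)) := by nlinarith [Real.exp_pos (r*a)]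
  have h3 : Real.exp (r * a) * (r * (a - b)) ≤ Real.exp (r * κ) * (r * (a - b)) := by
    have hb : Real.exp (r * κ) ≤ Real.exp (r * a) :=
      Real.exp_le_exp.2 (by nlinarith)
    have : r * (a - b) < 0 := mul_neg_of_neg_of_pos hr (by linarith)
    nlinarith
  nlinarith


-- integrability of (z+1)^c on Ioi 0 for c < -1
lemma intOn_rpow {c : ℝ} (hc : c < -1) :
    IntegrableOn (fun z : ℝ => (z + 1) ^ c) (Ioi (0:ℝ)) := by
  have hc1 : c + 1 < 0 := by linarith
  have hc1' : c + 1 ≠ 0 := by linarith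
  apply integrableOn_Ioi_deriv_of_nonneg
    (g := fun z : ℝ => (z + 1) ^ (c + 1) / (c + 1)) (l := 0)
  · apply ContinuousWithinAt.div_const
    apply ContinuousWithinAt.rpow_const
    · exact (continuous_id.add continuous_const).continuousWithinAt
    · left; norm_num
  · intro z hz
    have hz1 : (0:ℝ) < z + 1 := by simp only [mem_Ioi] at hz; linarith
    have hd : HasDerivAt (fun z : ℝ => (z + 1) ^ (c + 1)) ((c+1) * (z+1)^c) z := by
      have h := ((hasDerivAt_id z).add_const 1).rpow_const (p := c + 1) (Or.inl hz1.ne')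
      simpa [add_sub_cancel_right] using h
    have := hd.div_const (c + 1)
    simpa [mul_div_assoc, mul_div_cancel_left₀ _ hc1'] using this
  · intro z hz
    have hz1 : (0:ℝ) < z + 1 := by simp only [mem_Ioi] at hz; linarith
    positivity
  · have h1 : Tendsto (fun z : ℝ => (z + 1) ^ (c+1)) atTop (nhds 0) := by
      have := (tendsto_rpow_neg_atTop (by linarith : 0 < -(c+1))).comp
        (tendsto_atTop_add_const_right atTop 1 tendsto_id)
      simpa [Function.comp_def] using this
    simpa using h1.div_const (c + 1)

-- FTC evaluation : ∫ (z+1)^(c-1) = -1/c for c<0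
lemma intpow_eval {c : ℝ} (hc : c < 0) :
    ∫ z in Ioi (0:ℝ), (z + 1) ^ (c - 1) = -1/c := by
  have hc' : c ≠ 0 := by linarith
  have := integral_Ioi_of_hasDerivAt_of_tendsto
    (f := fun z : ℝ => (z + 1) ^ c / c) (f' := fun z : ℝ => (z + 1) ^ (c - 1))
    (a := 0) (m := 0) ?_ ?_ ?_ ?_
  · rw [this]; rw [neg_div]; simp
  · apply ContinuousWithinAt.div_const
    apply ContinuousWithinAt.rpow_const
    · exact (continuous_id.add continuous_const).continuousWithinAt
    · left; norm_num
  · intro z hz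
    have hz1 : (0:ℝ) < z + 1 := by simp only [mem_Ioi] at hz; linarith
    have hd : HasDerivAt (fun z : ℝ => (z + 1) ^ c) (c * (z+1)^(c-1)) z := by
      have h := ((hasDerivAt_id z).add_const 1).rpow_const (p := c) (Or.inl hz1.ne')
      simpa using h
    have := hd.div_const c
    simpa [mul_div_assoc, mul_div_cancel_left₀ _ hc'] using this
  · exact intOn_rpow (by linarith)
  · have h1 : Tendsto (fun z : ℝ => (z + 1) ^ c) atTop (nhds 0) := by
      have := (tendsto_rpow_neg_atTop (by linarith : 0 < -c)).comp
        (tendsto_atTop_add_const_right atTop 1 tendsto_id)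
      simpa [Function.comp_def] using this
    simpa using h1.div_const c

-- key bound : z/x+1 ≥ (z+1)/max x 1
lemma base_bound {x z : ℝ} (hx : 0 < x) (hz : 0 ≤ z) :
    (z + 1) / max x 1 ≤ z / x + 1 := by
  have hm : 0 < max x 1 := lt_of_lt_of_le one_pos (le_max_right x 1)
  rw [div_le_iff₀ hm]
  have h1 : z / x * x = z := div_mul_cancel₀ z hx.ne'
  have h2 : x ≤ max x 1 := le_max_left x 1
  have h3 : 1 ≤ max x 1 := le_max_right x 1
  have h4 : z / x * x ≤ z / x * max x 1 := by
    apply mul_le_mul_of_nonneg_left h2 (by positivity)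
  nlinarith [h4, h1]

-- integrability of the product form
lemma intOn_prod {x p q : ℝ} (hx : 0 < x) (hp : p ≤ 0) (hpq : p + q < -1) :
    IntegrableOn (fun z : ℝ => (z / x + 1) ^ p * (z + 1) ^ q) (Ioi (0:ℝ)) := by
  have hm : 0 < max x 1 := lt_of_lt_of_le one_pos (le_max_right x 1)
  apply Integrable.mono' (g := fun z : ℝ => (max x 1) ^ (-p) * (z + 1) ^ (p + q))
  · exact (intOn_rpow hpq).const_mul _
  · apply ContinuousOn.aestronglyMeasurable _ measurableSet_Ioi
    apply ContinuousOn.mul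
    · apply ContinuousOn.rpow_const
      · exact ((continuous_id.div_const x).add continuous_const).continuousOn
      · intro z hz
        have hz0 : (0:ℝ) < z := hz
        left; positivity
    · apply ContinuousOn.rpow_const
      · exact (continuous_id.add continuous_const).continuousOn
      · intro z hz
        have hz0 : (0:ℝ) < z := hz
        left; positivity
  · apply (ae_restrict_mem measurableSet_Ioi).mono
    intro z hz
    have hz0 : (0:ℝ) < z := hz
    have hz1 : (0:ℝ) < z + 1 := by linarith
    have hb : (0:ℝ) < z / x + 1 := by positivity
    rw [Real.norm_eq_abs, abs_of_nonneg (by positivity)]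
    have hm1 : (0:ℝ) < (z + 1) / max x 1 := by positivity
    have h1 : (z / x + 1) ^ p ≤ ((z + 1) / max x 1) ^ p :=
      Real.rpow_le_rpow_of_nonpos hm1 (base_bound hx hz0.le) hp
    have h2 : ((z + 1) / max x 1) ^ p = (z + 1) ^ p * (max x 1) ^ (-p) := by
      rw [Real.div_rpow (by linarith) hm.le, Real.rpow_neg hm.le, div_eq_mul_inv]
    have h3 : (z + 1) ^ q ≤ (z + 1) ^ q := le_refl _
    calc (z / x + 1) ^ p * (z + 1) ^ q
        ≤ (z + 1) ^ p * (max x 1) ^ (-p) * (z + 1) ^ q := by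
          rw [← h2]
          exact mul_le_mul_of_nonneg_right (h2 ▸ h1) (by positivity)
      _ = (max x 1) ^ (-p) * (z + 1) ^ (p + q) := by
          rw [Real.rpow_add hz1]; ring


lemma tendsto_rpow_shift {c : ℝ} (hc : c < 0) :
    Tendsto (fun z : ℝ => (z + 1) ^ c) atTop (nhds 0) := by
  have := (tendsto_rpow_neg_atTop (by linarith : 0 < -c)).comp
    (tendsto_atTop_add_const_right atTop 1 tendsto_id)
  simpa [Function.comp_def] using this

lemma intOn_prodlog {x p : ℝ} (hx : 0 < x) (hp : p < -1) :
    IntegrableOn (fun z : ℝ => (z / x + 1) ^ p * Real.log (z + 1)) (Ioi (0:ℝ)) := by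
  have hm : (0:ℝ) < max x 1 := lt_of_lt_of_le one_pos (le_max_right x 1)
  have hε : (0:ℝ) < (-1 - p)/2 := by linarith
  apply Integrable.mono'
    (g := fun z : ℝ => ((max x 1) ^ (-p) / ((-1-p)/2)) * (z + 1) ^ (p + (-1-p)/2))
  · exact (intOn_rpow (by linarith)).const_mul _
  · apply ContinuousOn.aestronglyMeasurable _ measurableSet_Ioi
    apply ContinuousOn.mul
    · apply ContinuousOn.rpow_const
      · exact ((continuous_id.div_const x).add continuous_const).continuousOn
      · intro z hz
        have hz0 : (0:ℝ) < z := hz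
        left; positivity
    · apply ContinuousOn.log
      · exact (continuous_id.add continuous_const).continuousOn
      · intro z hz
        have hz0 : (0:ℝ) < z := hz
        intro h; nlinarith [h]
  · apply (ae_restrict_mem measurableSet_Ioi).mono
    intro z hz
    have hz0 : (0:ℝ) < z := hz
    have hz1 : (0:ℝ) < z + 1 := by linarith
    have hlog : 0 ≤ Real.log (z + 1) := Real.log_nonneg (by linarith)
    rw [Real.norm_eq_abs, abs_of_nonneg (by positivity)]
    have hm1 : (0:ℝ) < (z + 1) / max x 1 := by positivity
    have h1 : (z / x + 1) ^ p ≤ ((z + 1) / max x 1) ^ p :=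
      Real.rpow_le_rpow_of_nonpos hm1 (base_bound hx hz0.le) (by linarith)
    have h2 : ((z + 1) / max x 1) ^ p = (z + 1) ^ p * (max x 1) ^ (-p) := by
      rw [Real.div_rpow (by linarith) hm.le, Real.rpow_neg hm.le, div_eq_mul_inv]
    have h3 : Real.log (z + 1) ≤ (z + 1) ^ ((-1-p)/2) / ((-1-p)/2) :=
      Real.log_le_rpow_div (by linarith) hε
    calc (z / x + 1) ^ p * Real.log (z + 1)
        ≤ ((z + 1) ^ p * (max x 1) ^ (-p)) * ((z + 1) ^ ((-1-p)/2) / ((-1-p)/2)) := by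
          apply mul_le_mul (h2 ▸ h1) h3 hlog
          positivity
      _ = ((max x 1) ^ (-p) / ((-1-p)/2)) * (z + 1) ^ (p + (-1-p)/2) := by
          rw [Real.rpow_add hz1]; ring

-- image of the substitution map
lemma phi_image {γ x : ℝ} (hγ : 0 < γ) (hx : 0 < x) :
    (fun u : ℝ => x * (u ^ (-γ) - 1)) '' Ioo 0 1 = Ioi (0:ℝ) := by
  ext z
  simp only [mem_image, mem_Ioi, mem_Ioo]
  constructor
  · rintro ⟨u, ⟨hu0, hu1⟩, rfl⟩
    have h1 : 1 < u ^ (-γ) :=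
      (Real.one_lt_rpow_iff_of_pos hu0).2 (Or.inr ⟨hu1, by linarith⟩)
    nlinarith
  · intro hz
    have hb : (1:ℝ) < z / x + 1 := by
      have : 0 < z / x := div_pos hz hx
      linarith
    have hb0 : (0:ℝ) < z / x + 1 := by linarith
    refine ⟨(z / x + 1) ^ (-(1/γ)), ⟨Real.rpow_pos_of_pos hb0 _, ?_⟩, ?_⟩
    · exact Real.rpow_lt_one_of_one_lt_of_neg hb (by rw [neg_lt, neg_zero]; positivity)
    · have h2 : ((z / x + 1) ^ (-(1/γ))) ^ (-γ) = (z / x + 1) ^ ((-(1/γ)) * (-γ)) :=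
        (Real.rpow_mul hb0.le _ _).symm
      have h3 : (-(1/γ)) * (-γ) = 1 := by field_simp
      rw [h2, h3, Real.rpow_one]
      field_simp
      ring

lemma phi_inj {γ x : ℝ} (hγ : 0 < γ) (hx : 0 < x) :
    InjOn (fun u : ℝ => x * (u ^ (-γ) - 1)) (Ioo 0 1) := by
  have : StrictAntiOn (fun u : ℝ => x * (u ^ (-γ) - 1)) (Ioo 0 1) := by
    intro u hu v hv huv
    have := Real.rpow_lt_rpow_of_neg hu.1 huv (by linarith : -γ < 0)
    simp only []
    nlinarith
  exact this.injOn

lemma subst_lemma {γ x : ℝ} (hγ : 0 < γ) (hx : 0 < x) (g : ℝ → ℝ) :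
    ∫ z in Ioi (0:ℝ), g z
      = ∫ u in Ioo (0:ℝ) 1, (x * (γ * u ^ (-γ - 1))) * g (x * (u ^ (-γ) - 1)) := by
  have himg := phi_image hγ hx
  have hderiv : ∀ u ∈ Ioo (0:ℝ) 1, HasDerivWithinAt (fun u : ℝ => x * (u ^ (-γ) - 1))
      (x * (-γ * u ^ (-γ - 1))) (Ioo 0 1) u := by
    intro u hu
    have h := ((Real.hasDerivAt_rpow_const (p := -γ) (Or.inl hu.1.ne')).sub_const 1).const_mul x
    exact h.hasDerivWithinAt
  have := integral_image_eq_integral_abs_deriv_smul measurableSet_Ioo hderiv (phi_inj hγ hx) g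
  rw [himg] at this
  rw [this]
  apply setIntegral_congr_fun measurableSet_Ioo
  intro u hu
  have hu0 : (0:ℝ) < u := hu.1
  have hup : (0:ℝ) < u ^ (-γ - 1) := Real.rpow_pos_of_pos hu0 _
  simp only [smul_eq_mul]
  rw [abs_of_neg (by have h := mul_pos hx (mul_pos hγ hup); nlinarith [h] : x * (-γ * u ^ (-γ - 1)) < 0)]
  ring_nf

-- E2 IBP part
lemma IBP2 {γ x s : ℝ} (hγ : 0 < γ) (hx : 0 < x) (hs : s < 0) :
    ∫ z in Ioi (0:ℝ), ((1/γ)/x) * ((z / x + 1) ^ (-(1/γ) - 1) * (z + 1) ^ s)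
      = s * (∫ z in Ioi (0:ℝ), (z / x + 1) ^ (-(1/γ)) * (z + 1) ^ (s - 1)) + 1 := by
  have ha : (0:ℝ) < 1/γ := by positivity
  set a := 1/γ with hadef
  have int1 : IntegrableOn (fun z : ℝ => (z / x + 1) ^ (-a - 1) * (z + 1) ^ s) (Ioi (0:ℝ)) :=
    intOn_prod hx (by linarith) (by linarith)
  have int2 : IntegrableOn (fun z : ℝ => (z / x + 1) ^ (-a) * (z + 1) ^ (s - 1)) (Ioi (0:ℝ)) :=
    intOn_prod hx (by linarith) (by linarith)
  have key := integral_Ioi_of_hasDerivAt_of_tendsto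
    (f := fun z : ℝ => (z / x + 1) ^ (-a) * (z + 1) ^ s)
    (f' := fun z : ℝ => (-(a/x)) * ((z / x + 1) ^ (-a - 1) * (z + 1) ^ s)
      + s * ((z / x + 1) ^ (-a) * (z + 1) ^ (s - 1)))
    (a := 0) (m := 0) ?_ ?_ ?_ ?_
  · have hsplit : ∫ z in Ioi (0:ℝ), ((-(a/x)) * ((z / x + 1) ^ (-a - 1) * (z + 1) ^ s)
        + s * ((z / x + 1) ^ (-a) * (z + 1) ^ (s - 1)))
        = (-(a/x)) * (∫ z in Ioi (0:ℝ), (z / x + 1) ^ (-a - 1) * (z + 1) ^ s)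
          + s * (∫ z in Ioi (0:ℝ), (z / x + 1) ^ (-a) * (z + 1) ^ (s - 1)) := by
      rw [integral_add (int1.const_mul _) (int2.const_mul _),
        integral_const_mul, integral_const_mul]
    rw [hsplit] at key
    have hF0 : ((0:ℝ) / x + 1) ^ (-a) * ((0:ℝ) + 1) ^ s = 1 := by
      simp [Real.one_rpow]
    rw [hF0] at key
    have heq : (a/x) * (∫ z in Ioi (0:ℝ), (z / x + 1) ^ (-a - 1) * (z + 1) ^ s)
        = s * (∫ z in Ioi (0:ℝ), (z / x + 1) ^ (-a) * (z + 1) ^ (s - 1)) + 1 := by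
      linarith [key]
    rw [← heq, ← integral_const_mul]
  · apply ContinuousAt.continuousWithinAt
    apply ContinuousAt.mul
    · apply ContinuousAt.rpow_const
      · exact (continuousAt_id.div_const x).add continuousAt_const
      · left; simp
    · apply ContinuousAt.rpow_const
      · exact continuousAt_id.add continuousAt_const
      · left; norm_num
  · intro z hz
    have hz0 : (0:ℝ) < z := hz
    have hz1 : (0:ℝ) < z + 1 := by linarith
    have hb : (0:ℝ) < z / x + 1 := by positivity
    have d1 : HasDerivAt (fun z : ℝ => z / x + 1) (1/x) z := by
      simpa using ((hasDerivAt_id z).div_const x).add_const 1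
    have db : HasDerivAt (fun z : ℝ => (z / x + 1) ^ (-a))
        ((1/x) * (-a) * (z / x + 1) ^ (-a - 1)) z := d1.rpow_const (Or.inl hb.ne')
    have d2 : HasDerivAt (fun z : ℝ => z + 1) 1 z := (hasDerivAt_id z).add_const 1
    have dc : HasDerivAt (fun z : ℝ => (z + 1) ^ s) (1 * s * (z + 1) ^ (s - 1)) z :=
      d2.rpow_const (Or.inl hz1.ne')
    have := db.mul dc
    refine this.congr_deriv ?_
    ring
  · exact ((int1.const_mul _).add (int2.const_mul _))
  · apply squeeze_zero' (g := fun z : ℝ => (z + 1) ^ s)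
    · filter_upwards [Ioi_mem_atTop (0:ℝ)] with z hz
      have hz0 : (0:ℝ) < z := hz
      have hb : (0:ℝ) < z / x + 1 := by positivity
      positivity
    · filter_upwards [Ioi_mem_atTop (0:ℝ)] with z hz
      have hz0 : (0:ℝ) < z := hz
      have hb : (1:ℝ) ≤ z / x + 1 := by
        have : 0 ≤ z / x := by positivity
        linarith
      have h1 : (z / x + 1) ^ (-a) ≤ 1 :=
        Real.rpow_le_one_of_one_le_of_nonpos hb (by linarith)
      have h2 : (0:ℝ) ≤ (z + 1) ^ s := by positivity
      nlinarith [h1, h2, Real.rpow_nonneg (by positivity : (0:ℝ) ≤ z/x+1) (-a)]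
    · exact tendsto_rpow_shift hs

-- E2 : full identity
lemma E2 {γ x s : ℝ} (hγ : 0 < γ) (hx : 0 < x) (hs : s < 0) :
    s * (∫ z in Ioi (0:ℝ), (z / x + 1) ^ (-(1/γ)) * (z + 1) ^ (s - 1)) + 1
      = ∫ u in Ioo (0:ℝ) 1, (1 + x * (u ^ (-γ) - 1)) ^ s := by
  rw [← IBP2 hγ hx hs]
  rw [subst_lemma hγ hx (fun z => ((1/γ)/x) * ((z / x + 1) ^ (-(1/γ) - 1) * (z + 1) ^ s))]
  apply setIntegral_congr_fun measurableSet_Ioo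
  intro u hu
  have hu0 : (0:ℝ) < u := hu.1
  have hγ' : γ ≠ 0 := hγ.ne'
  have hx' : x ≠ 0 := hx.ne'
  simp only []
  have h1 : x * (u ^ (-γ) - 1) / x + 1 = u ^ (-γ) := by field_simp; ring
  rw [h1]
  have h2 : (u ^ (-γ)) ^ (-(1/γ) - 1) = u ^ (γ + 1) := by
    rw [← Real.rpow_mul hu0.le]
    congr 1
    field_simp
    ring
  rw [h2]
  have h3 : x * (u ^ (-γ) - 1) + 1 = 1 + x * (u ^ (-γ) - 1) := by ring
  rw [h3]
  have h4 : u ^ (-γ - 1) * u ^ (γ + 1) = 1 := by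
    rw [← Real.rpow_add hu0]
    norm_num
  field_simp
  linear_combination ((1 + x * (u ^ (-γ) - 1)) ^ s) * h4

-- E1 IBP part
lemma IBP1 {γ x : ℝ} (hγ : 0 < γ) (hx : 0 < x) :
    ∫ z in Ioi (0:ℝ), ((1/γ)/x) * ((z / x + 1) ^ (-(1/γ) - 1) * Real.log (z + 1))
      = ∫ z in Ioi (0:ℝ), (z / x + 1) ^ (-(1/γ)) * (z + 1)⁻¹ := by
  have ha : (0:ℝ) < 1/γ := by positivity
  set a := 1/γ with hadef
  have int1 : IntegrableOn (fun z : ℝ => (z / x + 1) ^ (-a - 1) * Real.log (z + 1)) (Ioi (0:ℝ)) :=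
    intOn_prodlog hx (by linarith)
  have int2 : IntegrableOn (fun z : ℝ => (z / x + 1) ^ (-a) * (z + 1)⁻¹) (Ioi (0:ℝ)) := by
    apply (intOn_prod hx (by linarith : -a ≤ 0) (by linarith : -a + -1 < -1)).congr_fun
      _ measurableSet_Ioi
    intro z hz
    simp only [Real.rpow_neg_one]
  have key := integral_Ioi_of_hasDerivAt_of_tendsto
    (f := fun z : ℝ => (z / x + 1) ^ (-a) * Real.log (z + 1))
    (f' := fun z : ℝ => (-(a/x)) * ((z / x + 1) ^ (-a - 1) * Real.log (z + 1))
      + (z / x + 1) ^ (-a) * (z + 1)⁻¹)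
    (a := 0) (m := 0) ?_ ?_ ?_ ?_
  · have hsplit : ∫ z in Ioi (0:ℝ), ((-(a/x)) * ((z / x + 1) ^ (-a - 1) * Real.log (z + 1))
        + (z / x + 1) ^ (-a) * (z + 1)⁻¹)
        = (-(a/x)) * (∫ z in Ioi (0:ℝ), (z / x + 1) ^ (-a - 1) * Real.log (z + 1))
          + ∫ z in Ioi (0:ℝ), (z / x + 1) ^ (-a) * (z + 1)⁻¹ := by
      rw [integral_add (int1.const_mul _) int2, integral_const_mul]
    rw [hsplit] at key
    have hF0 : ((0:ℝ) / x + 1) ^ (-a) * Real.log ((0:ℝ) + 1) = 0 := by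
      simp
    rw [hF0] at key
    have heq : (a/x) * (∫ z in Ioi (0:ℝ), (z / x + 1) ^ (-a - 1) * Real.log (z + 1))
        = ∫ z in Ioi (0:ℝ), (z / x + 1) ^ (-a) * (z + 1)⁻¹ := by
      linarith [key]
    rw [← heq, ← integral_const_mul]
  · apply ContinuousAt.continuousWithinAt
    apply ContinuousAt.mul
    · apply ContinuousAt.rpow_const
      · exact (continuousAt_id.div_const x).add continuousAt_const
      · left; simp
    · apply ContinuousAt.log
      · exact continuousAt_id.add continuousAt_const
      · norm_num
  · intro z hz
    have hz0 : (0:ℝ) < z := hz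
    have hz1 : (0:ℝ) < z + 1 := by linarith
    have hb : (0:ℝ) < z / x + 1 := by positivity
    have d1 : HasDerivAt (fun z : ℝ => z / x + 1) (1/x) z := by
      simpa using ((hasDerivAt_id z).div_const x).add_const 1
    have db : HasDerivAt (fun z : ℝ => (z / x + 1) ^ (-a))
        ((1/x) * (-a) * (z / x + 1) ^ (-a - 1)) z := d1.rpow_const (Or.inl hb.ne')
    have d2 : HasDerivAt (fun z : ℝ => z + 1) 1 z := (hasDerivAt_id z).add_const 1
    have dc : HasDerivAt (fun z : ℝ => Real.log (z + 1)) (1 / (z + 1)) z := d2.log hz1.ne'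
    have := db.mul dc
    refine this.congr_deriv ?_
    rw [one_div]
    ring
  · exact ((int1.const_mul _).add int2)
  · have hM : (0:ℝ) < max x 1 := lt_of_lt_of_le one_pos (le_max_right x 1)
    apply squeeze_zero'
      (g := fun z : ℝ => ((max x 1) ^ a * (2/a)) * (z + 1) ^ (-(a/2)))
    · filter_upwards [Ioi_mem_atTop (0:ℝ)] with z hz
      have hz0 : (0:ℝ) < z := hz
      have hb : (0:ℝ) < z / x + 1 := by positivity
      have : 0 ≤ Real.log (z + 1) := Real.log_nonneg (by linarith)
      positivity
    · filter_upwards [Ioi_mem_atTop (0:ℝ)] with z hz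
      have hz0 : (0:ℝ) < z := hz
      have hz1 : (0:ℝ) < z + 1 := by linarith
      have hm1 : (0:ℝ) < (z + 1) / max x 1 := by positivity
      have h1 : (z / x + 1) ^ (-a) ≤ ((z + 1) / max x 1) ^ (-a) :=
        Real.rpow_le_rpow_of_nonpos hm1 (base_bound hx hz0.le) (by linarith)
      have h2 : ((z + 1) / max x 1) ^ (-a) = (z + 1) ^ (-a) * (max x 1) ^ a := by
        rw [Real.div_rpow (by linarith) hM.le, Real.rpow_neg hM.le, div_eq_mul_inv, inv_inv]
      have h3 : Real.log (z + 1) ≤ (z + 1) ^ (a/2) / (a/2) :=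
        Real.log_le_rpow_div (by linarith) (by positivity)
      have hlog : 0 ≤ Real.log (z + 1) := Real.log_nonneg (by linarith)
      calc (z / x + 1) ^ (-a) * Real.log (z + 1)
          ≤ ((z + 1) ^ (-a) * (max x 1) ^ a) * ((z + 1) ^ (a/2) / (a/2)) := by
            apply mul_le_mul (h2 ▸ h1) h3 hlog
            positivity
        _ = ((max x 1) ^ a * (2/a)) * (z + 1) ^ (-(a/2)) := by
            rw [show (-(a/2) : ℝ) = -a + a/2 by ring, Real.rpow_add hz1]
            field_simp
    · have := tendsto_rpow_shift (by positivity |> neg_neg_of_pos : -(a/2) < 0)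
      simpa using (this.const_mul ((max x 1) ^ a * (2/a)))

-- E1 : full identity
lemma E1 {γ x : ℝ} (hγ : 0 < γ) (hx : 0 < x) :
    ∫ z in Ioi (0:ℝ), (z / x + 1) ^ (-(1/γ)) * (z + 1)⁻¹
      = ∫ u in Ioo (0:ℝ) 1, Real.log (1 + x * (u ^ (-γ) - 1)) := by
  rw [← IBP1 hγ hx]
  rw [subst_lemma hγ hx (fun z => ((1/γ)/x) * ((z / x + 1) ^ (-(1/γ) - 1) * Real.log (z + 1)))]
  apply setIntegral_congr_fun measurableSet_Ioo
  intro u hu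
  have hu0 : (0:ℝ) < u := hu.1
  have hγ' : γ ≠ 0 := hγ.ne'
  have hx' : x ≠ 0 := hx.ne'
  simp only []
  have h1 : x * (u ^ (-γ) - 1) / x + 1 = u ^ (-γ) := by field_simp; ring
  rw [h1]
  have h2 : (u ^ (-γ)) ^ (-(1/γ) - 1) = u ^ (γ + 1) := by
    rw [← Real.rpow_mul hu0.le]
    congr 1
    field_simp
    ring
  rw [h2]
  have h3 : x * (u ^ (-γ) - 1) + 1 = 1 + x * (u ^ (-γ) - 1) := by ring
  rw [h3]
  have h4 : u ^ (-γ - 1) * u ^ (γ + 1) = 1 := by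
    rw [← Real.rpow_add hu0]
    norm_num
  field_simp
  linear_combination (Real.log (1 + x * (u ^ (-γ) - 1))) * h4


noncomputable def Lf (γ x u : ℝ) : ℝ := Real.log (1 + x * (u ^ (-γ) - 1))

lemma u_rpow_gt_one {γ u : ℝ} (hγ : 0 < γ) (hu : u ∈ Ioo (0:ℝ) 1) : 1 < u ^ (-γ) :=
  (Real.one_lt_rpow_iff_of_pos hu.1).2 (Or.inr ⟨hu.2, by linarith⟩)

lemma W_gt_one {γ x u : ℝ} (hγ : 0 < γ) (hx : 0 < x) (hu : u ∈ Ioo (0:ℝ) 1) :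
    1 < 1 + x * (u ^ (-γ) - 1) := by
  have := u_rpow_gt_one hγ hu
  nlinarith

lemma Lf_pos {γ x u : ℝ} (hγ : 0 < γ) (hx : 0 < x) (hu : u ∈ Ioo (0:ℝ) 1) :
    0 < Lf γ x u := Real.log_pos (W_gt_one hγ hx hu)

lemma Lf_anti {γ x : ℝ} (hγ : 0 < γ) (hx : 0 < x) :
    StrictAntiOn (Lf γ x) (Ioo (0:ℝ) 1) := by
  intro u hu v hv huv
  have h1 : v ^ (-γ) < u ^ (-γ) := Real.rpow_lt_rpow_of_neg hu.1 huv (by linarith)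
  have h2 : (0:ℝ) < 1 + x * (v ^ (-γ) - 1) := by
    have := W_gt_one hγ hx hv; linarith
  apply Real.log_lt_log h2
  nlinarith

lemma Lf_contOn {γ x : ℝ} (hγ : 0 < γ) (hx : 0 < x) :
    ContinuousOn (Lf γ x) (Ioo (0:ℝ) 1) := by
  apply ContinuousOn.log
  · apply ContinuousOn.add continuousOn_const
    apply ContinuousOn.mul continuousOn_const
    apply ContinuousOn.sub _ continuousOn_const
    apply ContinuousOn.rpow_const continuousOn_id
    intro u hu; left; exact hu.1.ne'
  · intro u hu
    have := W_gt_one hγ hx hu; intro h; rw [h] at this; linarith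

lemma Lf_int {γ x : ℝ} (hγ : 0 < γ) (hx : 0 < x) :
    IntegrableOn (Lf γ x) (Ioo (0:ℝ) 1) := by
  have hbound : ∀ u ∈ Ioo (0:ℝ) 1,
      Lf γ x u ≤ ((1 + x) ^ (1/(2*γ)) * (2*γ)) * u ^ (-(1/2) : ℝ) := by
    intro u hu
    have hu0 : (0:ℝ) < u := hu.1
    have h1 : 1 < u ^ (-γ) := u_rpow_gt_one hγ hu
    have hW : 1 + x * (u ^ (-γ) - 1) ≤ (1 + x) * u ^ (-γ) := by nlinarith
    have hWpos : (0:ℝ) < 1 + x * (u ^ (-γ) - 1) := by nlinarith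
    have h2 : Lf γ x u ≤ Real.log ((1 + x) * u ^ (-γ)) := Real.log_le_log hWpos hW
    have h3 : Real.log ((1 + x) * u ^ (-γ))
        ≤ ((1 + x) * u ^ (-γ)) ^ (1/(2*γ)) / (1/(2*γ)) :=
      Real.log_le_rpow_div (by positivity) (by positivity)
    have h4 : ((1 + x) * u ^ (-γ)) ^ (1/(2*γ))
        = (1 + x) ^ (1/(2*γ)) * u ^ (-(1/2) : ℝ) := by
      rw [Real.mul_rpow (by positivity) (by positivity), ← Real.rpow_mul hu0.le]
      congr 2
      field_simp
    calc Lf γ x u ≤ ((1 + x) * u ^ (-γ)) ^ (1/(2*γ)) / (1/(2*γ)) := le_trans h2 h3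
      _ = ((1 + x) ^ (1/(2*γ)) * (2*γ)) * u ^ (-(1/2) : ℝ) := by
          rw [h4]; field_simp
  apply Integrable.mono'
    (g := fun u : ℝ => ((1 + x) ^ (1/(2*γ)) * (2*γ)) * u ^ (-(1/2) : ℝ))
  · apply Integrable.const_mul
    have h := intervalIntegral.intervalIntegrable_rpow' (a := 0) (b := 1)
      (r := -(1/2)) (by norm_num)
    rw [intervalIntegrable_iff_integrableOn_Ioc_of_le zero_le_one] at h
    exact h.mono_set Ioo_subset_Ioc_self
  · exact (Lf_contOn hγ hx).aestronglyMeasurable measurableSet_Ioo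
  · apply (ae_restrict_mem measurableSet_Ioo).mono
    intro u hu
    rw [Real.norm_eq_abs, abs_of_nonneg (Lf_pos hγ hx hu).le]
    exact hbound u hu

lemma int_pos_of_nonneg_of_pos_off {f : ℝ → ℝ} (hf : IntegrableOn f (Ioo (0:ℝ) 1))
    (hnn : ∀ u ∈ Ioo (0:ℝ) 1, 0 ≤ f u) (w : ℝ)
    (hpos : ∀ u ∈ Ioo (0:ℝ) 1, u ≠ w → 0 < f u) :
    0 < ∫ u in Ioo (0:ℝ) 1, f u := by
  rw [setIntegral_pos_iff_support_of_nonneg_ae _ hf]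
  · have hsub : Ioo (0:ℝ) 1 \ {w} ⊆ Function.support f ∩ Ioo (0:ℝ) 1 := by
      rintro u ⟨hu, hw⟩
      exact ⟨(hpos u hu (by simpa using hw)).ne', hu⟩
    calc (0:ENNReal) < volume (Ioo (0:ℝ) 1 \ {w}) := by
          rw [measure_diff_null (measure_singleton w)]
          simp
      _ ≤ volume (Function.support f ∩ Ioo (0:ℝ) 1) := measure_mono hsub
  · apply (ae_restrict_mem measurableSet_Ioo).mono
    intro u hu
    exact hnn u hu

lemma int_pos_of_pos {f : ℝ → ℝ} (hf : IntegrableOn f (Ioo (0:ℝ) 1))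
    (hpos : ∀ u ∈ Ioo (0:ℝ) 1, 0 < f u) :
    0 < ∫ u in Ioo (0:ℝ) 1, f u :=
  int_pos_of_nonneg_of_pos_off hf (fun u hu => (hpos u hu).le) 2 (fun u hu _ => hpos u hu)

lemma m_pos {γ x : ℝ} (hγ : 0 < γ) (hx : 0 < x) :
    0 < ∫ u in Ioo (0:ℝ) 1, Lf γ x u :=
  int_pos_of_pos (Lf_int hγ hx) (fun u hu => Lf_pos hγ hx hu)

lemma exp_int {γ x c : ℝ} (hγ : 0 < γ) (hx : 0 < x) (hc : c ≤ 0) :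
    IntegrableOn (fun u => Real.exp (c * Lf γ x u)) (Ioo (0:ℝ) 1) := by
  apply Integrable.mono' (g := fun _ : ℝ => (1:ℝ))
  · exact integrableOn_const (by simp)
  · apply ContinuousOn.aestronglyMeasurable _ measurableSet_Ioo
    exact (continuousOn_const.mul (Lf_contOn hγ hx)).rexp
  · apply (ae_restrict_mem measurableSet_Ioo).mono
    intro u hu
    rw [Real.norm_eq_abs, abs_of_nonneg (Real.exp_pos _).le]
    rw [← Real.exp_zero]
    apply Real.exp_le_exp.2
    have := Lf_pos hγ hx hu
    nlinarith




-- four point, in terms of Lf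
lemma key4 {γ x1 x2 u v : ℝ} (hγ : 0 < γ) (hx1 : 0 < x1) (h12 : x1 < x2)
    (hu : u ∈ Ioo (0:ℝ) 1) (hv : v ∈ Ioo (0:ℝ) 1) (huv : u < v) :
    Lf γ x2 u * Lf γ x1 v < Lf γ x1 u * Lf γ x2 v := by
  have ht2 : 0 < v ^ (-γ) - 1 := by have := u_rpow_gt_one hγ hv; linarith
  have ht21 : v ^ (-γ) - 1 < u ^ (-γ) - 1 := by
    have := Real.rpow_lt_rpow_of_neg hu.1 huv (by linarith : -γ < 0)
    linarith
  have h := fourpt hx1 h12 ht2 ht21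
  simpa [Lf] using h

theorem main_lt {γ r x1 x2 : ℝ} (hγ : 0 < γ) (hr : r < 0) (hx1 : 0 < x1) (h12 : x1 < x2) :
    (∫ u in Ioo (0:ℝ) 1, Real.exp (r * (Lf γ x2 u / (∫ v in Ioo (0:ℝ) 1, Lf γ x2 v))))
      < ∫ u in Ioo (0:ℝ) 1, Real.exp (r * (Lf γ x1 u / (∫ v in Ioo (0:ℝ) 1, Lf γ x1 v))) := by
  have hx2 : 0 < x2 := lt_trans hx1 h12
  set m1 : ℝ := ∫ v in Ioo (0:ℝ) 1, Lf γ x1 v with hm1def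
  set m2 : ℝ := ∫ v in Ioo (0:ℝ) 1, Lf γ x2 v with hm2def
  have hm1 : 0 < m1 := m_pos hγ hx1
  have hm2 : 0 < m2 := m_pos hγ hx2
  set g1 : ℝ → ℝ := fun u => Lf γ x1 u / m1 with hg1def
  set g2 : ℝ → ℝ := fun u => Lf γ x2 u / m2 with hg2def
  have hg1int : IntegrableOn g1 (Ioo (0:ℝ) 1) := (Lf_int hγ hx1).div_const m1
  have hg2int : IntegrableOn g2 (Ioo (0:ℝ) 1) := (Lf_int hγ hx2).div_const m2
  have hIg1 : ∫ u in Ioo (0:ℝ) 1, g1 u = 1 := by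
    rw [hg1def]
    simp only [integral_div]
    rw [← hm1def, div_self hm1.ne']
  have hIg2 : ∫ u in Ioo (0:ℝ) 1, g2 u = 1 := by
    rw [hg2def]
    simp only [integral_div]
    rw [← hm2def, div_self hm2.ne']
  -- continuity of G
  have hGcont : ContinuousOn (fun u => g2 u - g1 u) (Ioo (0:ℝ) 1) :=
    ((Lf_contOn hγ hx2).div_const m2).sub ((Lf_contOn hγ hx1).div_const m1)
  -- existence of a crossing point
  have hex : ∃ w ∈ Ioo (0:ℝ) 1, g2 w = g1 w := by
    by_contra hcon
    push_neg at hcon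
    have hsign : (∀ u ∈ Ioo (0:ℝ) 1, 0 < g2 u - g1 u) ∨
        (∀ u ∈ Ioo (0:ℝ) 1, g2 u - g1 u < 0) := by
      by_contra hs
      push_neg at hs
      obtain ⟨⟨u, hu, hule⟩, ⟨v, hv, hvge⟩⟩ := hs
      have hune : g2 u - g1 u < 0 :=
        lt_of_le_of_ne hule (fun h => hcon u hu (by linarith [sub_eq_zero.1 h]))
      have hvne : 0 < g2 v - g1 v := by
        rcases lt_or_eq_of_le hvge with h | h
        · exact h
        · exact absurd (sub_eq_zero.1 h.symm) (fun hh => hcon v hv hh)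
      have hsub : uIcc u v ⊆ Ioo (0:ℝ) 1 := Set.ordConnected_Ioo.uIcc_subset hu hv
      have hmem : (0:ℝ) ∈ uIcc (g2 u - g1 u) (g2 v - g1 v) := by
        rw [mem_uIcc]; left; exact ⟨hune.le, hvne.le⟩
      obtain ⟨w, hw, hGw⟩ := intermediate_value_uIcc (hGcont.mono hsub) hmem
      exact hcon w (hsub hw) (by linarith [sub_eq_zero.1 hGw])
    have hGint : IntegrableOn (fun u => g2 u - g1 u) (Ioo (0:ℝ) 1) := hg2int.sub hg1int
    have hGzero : ∫ u in Ioo (0:ℝ) 1, (g2 u - g1 u) = 0 := by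
      rw [integral_sub hg2int hg1int, hIg1, hIg2]; ring
    rcases hsign with hs | hs
    · have := int_pos_of_pos hGint hs
      rw [hGzero] at this; exact lt_irrefl 0 this
    · have := int_pos_of_pos (f := fun u => g1 u - g2 u) (hg1int.sub hg2int)
        (fun u hu => by show 0 < g1 u - g2 u; linarith [hs u hu])
      have h2 : ∫ u in Ioo (0:ℝ) 1, (g1 u - g2 u) = 0 := by
        rw [integral_sub hg1int hg2int, hIg1, hIg2]; ring
      rw [h2] at this; exact lt_irrefl 0 this
  obtain ⟨u₀, hu₀, hcross⟩ := hex
  obtain ⟨κ, hκdef⟩ : ∃ κ : ℝ, κ = g1 u₀ := ⟨_, rfl⟩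
  have hL1pos : ∀ u ∈ Ioo (0:ℝ) 1, 0 < Lf γ x1 u := fun u hu => Lf_pos hγ hx1 hu
  have hL2pos : ∀ u ∈ Ioo (0:ℝ) 1, 0 < Lf γ x2 u := fun u hu => Lf_pos hγ hx2 hu
  have heq0 : Lf γ x2 u₀ * m1 = Lf γ x1 u₀ * m2 := by
    have h : Lf γ x2 u₀ / m2 = Lf γ x1 u₀ / m1 := hcross
    rw [div_eq_div_iff hm2.ne' hm1.ne'] at h
    linarith [h]
  -- sign of G off the crossing point
  have hneg : ∀ u ∈ Ioo (0:ℝ) 1, u < u₀ → g2 u < g1 u := by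
    intro u hu hlt
    have h4 := key4 hγ hx1 h12 hu hu₀ hlt
    have h5 := mul_lt_mul_of_pos_right h4 hm1
    have h8 : 0 < Lf γ x1 u₀ := hL1pos u₀ hu₀
    have h6 : Lf γ x1 u * (Lf γ x2 u₀ * m1) = Lf γ x1 u * (Lf γ x1 u₀ * m2) := by rw [heq0]
    have h9 : Lf γ x2 u * m1 < Lf γ x1 u * m2 := by nlinarith [h5, h6, h8]
    show Lf γ x2 u / m2 < Lf γ x1 u / m1
    rw [div_lt_div_iff₀ hm2 hm1]
    linarith [h9]
  have hpos : ∀ u ∈ Ioo (0:ℝ) 1, u₀ < u → g1 u < g2 u := by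
    intro u hu hlt
    have h4 := key4 hγ hx1 h12 hu₀ hu hlt
    have h5 := mul_lt_mul_of_pos_right h4 hm1
    have h8 : 0 < Lf γ x1 u₀ := hL1pos u₀ hu₀
    have h6 : Lf γ x1 u * (Lf γ x2 u₀ * m1) = Lf γ x1 u * (Lf γ x1 u₀ * m2) := by rw [heq0]
    have h9 : Lf γ x1 u * m2 < Lf γ x2 u * m1 := by nlinarith [h5, h6, h8]
    show Lf γ x1 u / m1 < Lf γ x2 u / m2
    rw [div_lt_div_iff₀ hm1 hm2]
    linarith [h9]
  -- monotonicity of g2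
  have hg2anti : ∀ u v : ℝ, u ∈ Ioo (0:ℝ) 1 → v ∈ Ioo (0:ℝ) 1 → u < v → g2 v < g2 u := by
    intro u v hu hv huv
    show Lf γ x2 v / m2 < Lf γ x2 u / m2
    rw [div_lt_div_iff₀ hm2 hm2]
    nlinarith [Lf_anti hγ hx2 hu hv huv, hm2]
  -- pointwise inequality
  have hΘ : ∀ u ∈ Ioo (0:ℝ) 1, u ≠ u₀ →
      Real.exp (r * g2 u) - Real.exp (r * g1 u) < r * Real.exp (r * κ) * (g2 u - g1 u) := by
    intro u hu hne
    rcases lt_or_gt_of_ne hne with h | h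
    · have hb : κ < g2 u := by
        have := hg2anti u u₀ hu hu₀ h
        rw [hκdef, ← hcross]; exact this
      exact expo1 hr hb.le (hneg u hu h)
    · have ha : g2 u < κ := by
        have := hg2anti u₀ u hu₀ hu h
        rw [hκdef, ← hcross]; exact this
      exact expo2 hr (hpos u hu h) ha.le
  -- integrability of the pieces
  have hc1 : r / m1 ≤ 0 := (div_neg_of_neg_of_pos hr hm1).le
  have hc2 : r / m2 ≤ 0 := (div_neg_of_neg_of_pos hr hm2).le
  have e1i : IntegrableOn (fun u => Real.exp (r * g1 u)) (Ioo (0:ℝ) 1) := by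
    apply (exp_int hγ hx1 hc1).congr_fun _ measurableSet_Ioo
    intro u hu
    show Real.exp (r / m1 * Lf γ x1 u) = Real.exp (r * (Lf γ x1 u / m1))
    congr 1; ring
  have e2i : IntegrableOn (fun u => Real.exp (r * g2 u)) (Ioo (0:ℝ) 1) := by
    apply (exp_int hγ hx2 hc2).congr_fun _ measurableSet_Ioo
    intro u hu
    show Real.exp (r / m2 * Lf γ x2 u) = Real.exp (r * (Lf γ x2 u / m2))
    congr 1; ring
  have i1 : IntegrableOn (fun u => r * Real.exp (r * κ) * (g2 u - g1 u)) (Ioo (0:ℝ) 1) :=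
    (hg2int.sub hg1int).const_mul _
  have i2 : IntegrableOn (fun u => Real.exp (r * g2 u) - Real.exp (r * g1 u)) (Ioo (0:ℝ) 1) :=
    e2i.sub e1i
  have hΘint : IntegrableOn (fun u => r * Real.exp (r * κ) * (g2 u - g1 u)
      - (Real.exp (r * g2 u) - Real.exp (r * g1 u))) (Ioo (0:ℝ) 1) := i1.sub i2
  have hΘposint : 0 < ∫ u in Ioo (0:ℝ) 1, (r * Real.exp (r * κ) * (g2 u - g1 u)
      - (Real.exp (r * g2 u) - Real.exp (r * g1 u))) := by
    apply int_pos_of_nonneg_of_pos_off hΘint _ u₀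
    · intro u hu hne
      have := hΘ u hu hne
      show 0 < r * Real.exp (r * κ) * (g2 u - g1 u)
          - (Real.exp (r * g2 u) - Real.exp (r * g1 u))
      linarith
    · intro u hu
      show 0 ≤ r * Real.exp (r * κ) * (g2 u - g1 u)
          - (Real.exp (r * g2 u) - Real.exp (r * g1 u))
      rcases eq_or_ne u u₀ with h | h
      · rw [h, hcross]
        ring_nf
        exact le_refl 0
      · have := hΘ u hu h
        linarith
  have hexpand : ∫ u in Ioo (0:ℝ) 1, (r * Real.exp (r * κ) * (g2 u - g1 u)
        - (Real.exp (r * g2 u) - Real.exp (r * g1 u)))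
      = (∫ u in Ioo (0:ℝ) 1, Real.exp (r * g1 u)) - ∫ u in Ioo (0:ℝ) 1, Real.exp (r * g2 u) := by
    rw [integral_sub i1 i2, integral_sub e2i e1i, integral_const_mul,
      integral_sub hg2int hg1int, hIg1, hIg2]
    ring
  rw [hexpand] at hΘposint
  have final : (∫ u in Ioo (0:ℝ) 1, Real.exp (r * g2 u))
      < ∫ u in Ioo (0:ℝ) 1, Real.exp (r * g1 u) := by linarith
  simpa only [hg1def, hg2def] using final




/-- ψ(x) = ψ₂(x, ψ₁(x)) - 1/(1-r), with
ψ₁(x) = ∫₀^∞ (z/x+1)^{-1/γ}(z+1)^{-1} dz and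
ψ₂(x,y) = (r/y)∫₀^∞ (z/x+1)^{-1/γ}(z+1)^{r/y-1} dz + 1,
is strictly decreasing on (0,∞) and x = 1 is its unique zero there. -/
theorem stmt7 (γ r : ℝ) (hγ : 0 < γ) (hr : r < 0)
    (ψ₁ : ℝ → ℝ) (ψ₂ : ℝ → ℝ → ℝ) (ψ : ℝ → ℝ)
    (hψ₁ : ∀ x : ℝ, 0 < x →
      ψ₁ x = ∫ z in Ioi (0:ℝ), (z / x + 1) ^ (-(1/γ)) * (z + 1)⁻¹)
    (hψ₂ : ∀ x y : ℝ, 0 < x → 0 < y →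
      ψ₂ x y = (r / y) *
        (∫ z in Ioi (0:ℝ), (z / x + 1) ^ (-(1/γ)) * (z + 1) ^ (r / y - 1)) + 1)
    (hψ : ∀ x : ℝ, 0 < x → ψ x = ψ₂ x (ψ₁ x) - 1 / (1 - r)) :
    StrictAntiOn ψ (Ioi 0) ∧ ∀ x ∈ Ioi (0:ℝ), (ψ x = 0 ↔ x = 1) := by
  have hγ' : γ ≠ 0 := hγ.ne'
  have h1r : (0:ℝ) < 1 - r := by linarith
  -- representation of ψ on (0, ∞)
  have hrep : ∀ x : ℝ, 0 < x → ψ x =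
      (∫ u in Ioo (0:ℝ) 1, Real.exp (r * (Lf γ x u / (∫ v in Ioo (0:ℝ) 1, Lf γ x v))))
        - 1 / (1 - r) := by
    intro x hx
    have hm : ψ₁ x = ∫ v in Ioo (0:ℝ) 1, Lf γ x v := by
      rw [hψ₁ x hx, E1 hγ hx]
      simp only [Lf]
    have hmpos : 0 < ψ₁ x := by rw [hm]; exact m_pos hγ hx
    have hs : r / ψ₁ x < 0 := div_neg_of_neg_of_pos hr hmpos
    rw [hψ x hx, hψ₂ x (ψ₁ x) hx hmpos, E2 hγ hx hs]
    congr 1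
    apply setIntegral_congr_fun measurableSet_Ioo
    intro u hu
    have hW : (0:ℝ) < 1 + x * (u ^ (-γ) - 1) := lt_trans one_pos (W_gt_one hγ hx hu)
    show (1 + x * (u ^ (-γ) - 1)) ^ (r / ψ₁ x)
        = Real.exp (r * (Lf γ x u / ∫ v in Ioo (0:ℝ) 1, Lf γ x v))
    rw [Real.rpow_def_of_pos hW, hm]
    congr 1
    simp only [Lf]
    ring
  have hanti : StrictAntiOn ψ (Ioi (0:ℝ)) := by
    intro x1 hx1 x2 hx2 h12
    rw [hrep x1 hx1, hrep x2 hx2]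
    have := main_lt hγ hr hx1 h12
    linarith
  -- value at 1
  have hψ₁1 : ψ₁ 1 = γ := by
    rw [hψ₁ 1 one_pos]
    have hcongr : EqOn (fun z : ℝ => (z / 1 + 1) ^ (-(1/γ)) * (z + 1)⁻¹)
        (fun z : ℝ => (z + 1) ^ ((-(1/γ)) - 1)) (Ioi (0:ℝ)) := by
      intro z hz
      have hz1 : (0:ℝ) < z + 1 := by have : (0:ℝ) < z := hz; linarith
      simp only [div_one]
      have he : -(1/γ) + (-1 : ℝ) = -(1/γ) - 1 := by ring
      rw [← Real.rpow_neg_one (z + 1), ← Real.rpow_add hz1, he]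
    rw [setIntegral_congr_fun measurableSet_Ioi hcongr,
      intpow_eval (by positivity |> neg_neg_of_pos : -(1/γ) < 0)]
    field_simp
  have hone : ψ 1 = 0 := by
    rw [hψ 1 one_pos, hψ₁1, hψ₂ 1 γ one_pos hγ]
    have hcongr : EqOn (fun z : ℝ => (z / 1 + 1) ^ (-(1/γ)) * (z + 1) ^ (r / γ - 1))
        (fun z : ℝ => (z + 1) ^ (((r - 1)/γ) - 1)) (Ioi (0:ℝ)) := by
      intro z hz
      have hz1 : (0:ℝ) < z + 1 := by have : (0:ℝ) < z := hz; linarith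
      simp only [div_one]
      have he : -(1/γ) + (r/γ - 1) = (r - 1)/γ - 1 := by field_simp; ring
      rw [← Real.rpow_add hz1, he]
    rw [setIntegral_congr_fun measurableSet_Ioi hcongr,
      intpow_eval (show (r - 1)/γ < 0 by apply div_neg_of_neg_of_pos <;> linarith)]
    have hAe : -1/((r - 1)/γ) = γ/(1 - r) := by
      rw [div_div_eq_mul_div,
        div_eq_div_iff (by linarith : r - 1 < 0).ne (by linarith : (0:ℝ) < 1 - r).ne']
      ring
    rw [hAe]
    field_simp
    ring
  refine ⟨hanti, fun x hx => ⟨fun h => ?_, fun h => h ▸ hone⟩⟩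
  by_contra hne
  have hx0 : (0:ℝ) < x := hx
  rcases lt_or_gt_of_ne hne with hlt | hgt
  · have := hanti hx (by norm_num : (1:ℝ) ∈ Ioi (0:ℝ)) hlt
    rw [h, hone] at this
    exact lt_irrefl 0 this
  · have := hanti (by norm_num : (1:ℝ) ∈ Ioi (0:ℝ)) hx hgt
    rw [h, hone] at this
    exact lt_irrefl 0 this

end Stmt7Aux
end
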